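/- Let r ≥ 0 and r₀, r₁, r₂, r₃, d be integers. Then there exist integers n₁, n₂, n₃, n₄, n₅ with 0 ≤ n₁ ≤ n₂ ≤ n₃ ≤ n₄ ≤ n₅ ≤ r, r₀ = n₁, r₁ = n₂, r₂ = n₃ − n₂ + n₁, r₃ = n₄ − n₃ + n₁ and d = 2n₅ − n₄ − r, if and only if the following conditions hold: (P1) 0 ≤ r₀ ≤ rᵢ ≤ r for i = 1,2,3; (P2) r₁ + r₂ + r₃ ≤ r + 2r₀; (P3) |d| ≤ r + 2r₀ − (r₁ + r₂ + r₃); (P4) d ≡ r + r₁ + r₂ + r₃ (mod 2). -/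
import Mathlib


/-- Remark V.5: the integer invariants `(r₀, r₁, r₂, r₃, d)` arising from the
classifying 5-tuples `n₁ ≤ n₂ ≤ n₃ ≤ n₄ ≤ n₅ ≤ r` are exactly those satisfying
(P1)-(P4). -/
theorem stmt11 (r r₀ r₁ r₂ r₃ d : ℤ) (hr : 0 ≤ r) :
    (∃ n₁ n₂ n₃ n₄ n₅ : ℤ,
        0 ≤ n₁ ∧ n₁ ≤ n₂ ∧ n₂ ≤ n₃ ∧ n₃ ≤ n₄ ∧ n₄ ≤ n₅ ∧ n₅ ≤ r ∧
        r₀ = n₁ ∧ r₁ = n₂ ∧ r₂ = n₃ - n₂ + n₁ ∧ r₃ = n₄ - n₃ + n₁ ∧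
        d = 2 * n₅ - n₄ - r) ↔
      ((0 ≤ r₀ ∧ r₀ ≤ r₁ ∧ r₀ ≤ r₂ ∧ r₀ ≤ r₃ ∧ r₁ ≤ r ∧ r₂ ≤ r ∧ r₃ ≤ r) ∧
        r₁ + r₂ + r₃ ≤ r + 2 * r₀ ∧
        |d| ≤ r + 2 * r₀ - (r₁ + r₂ + r₃) ∧
        d ≡ r + r₁ + r₂ + r₃ [ZMOD 2]) := by
  simp only [Int.ModEq]
  constructor
  · rintro ⟨n₁, n₂, n₃, n₄, n₅, h1, h2, h3, h4, h5, h6, e0, e1, e2, e3, e4⟩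
    subst e0 e1 e2 e3 e4
    refine ⟨⟨by omega, by omega, by omega, by omega, by omega, by omega, by omega⟩,
      by omega, by rw [abs_le]; omega, by omega⟩
  · rintro ⟨⟨p1, p2, p3, p4, p5, p6, p7⟩, hp2, hp3, hp4⟩
    rw [abs_le] at hp3
    have h2 : (2:ℤ) ∣ d + (r₁ + r₂ + r₃ - 2 * r₀) + r := by omega
    obtain ⟨k, hk⟩ := h2
    exact ⟨r₀, r₁, r₁ + r₂ - r₀, r₁ + r₂ + r₃ - 2 * r₀, k, by omega, by omega, by omega,
      by omega, by omega, by omega, rfl, rfl, by ring, by ring, by omega⟩
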